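/- For any continued fraction [a_0,a_1,a_2,...] with positive integer partial quotients a_k (k ≥ 1), there is no index k such that the denominators t_k, t_{k+1}, t_{k+2}, t_{k+3} are all odd and the Jacobi symbols satisfy (s_k/t_k) = -1, (s_{k+1}/t_{k+1}) = 1, (s_{k+2}/t_{k+2}) = 1, (s_{k+3}/t_{k+3}) = -1. -/

import Mathlib

/-- Numerators of continued fraction convergents: `cfS a k = s_k`
(with `s_{-1} = 1`, `s_0 = a_0`, `s_k = a_k s_{k-1} + s_{k-2}`). -/
def cfS (a : ℕ → ℤ) : ℕ → ℤ
  | 0 => a 0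
  | 1 => a 1 * a 0 + 1
  | (k+2) => a (k+2) * cfS a (k+1) + cfS a k

/-- Denominators of continued fraction convergents: `cfT a k = t_k`
(with `t_{-1} = 0`, `t_0 = 1`, `t_k = a_k t_{k-1} + t_{k-2}`). -/
def cfT (a : ℕ → ℤ) : ℕ → ℤ
  | 0 => 1
  | 1 => a 1
  | (k+2) => a (k+2) * cfT a (k+1) + cfT a k

lemma cfT_pos (a : ℕ → ℤ) (ha : ∀ i, 1 ≤ i → 0 < a i) : ∀ k, 0 < cfT a k := by
  have h : ∀ k, 0 < cfT a k ∧ 0 < cfT a (k+1) := by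
    intro k
    induction k with
    | zero => exact ⟨by simp [cfT], by simpa [cfT] using ha 1 le_rfl⟩
    | succ n ih =>
      refine ⟨ih.2, ?_⟩
      show 0 < a (n+2) * cfT a (n+1) + cfT a n
      have := ha (n+2) (by omega)
      nlinarith [ih.1, ih.2]
  exact fun k => (h k).1

lemma cfDet (a : ℕ → ℤ) :
    ∀ k, cfS a (k+1) * cfT a k - cfS a k * cfT a (k+1) = (-1)^k := by
  intro k
  induction k with
  | zero => show (a 1 * a 0 + 1) * 1 - a 0 * a 1 = _ ; ring
  | succ n ih =>
    show (a (n+2) * cfS a (n+1) + cfS a n) * cfT a (n+1)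
        - cfS a (n+1) * (a (n+2) * cfT a (n+1) + cfT a n) = (-1)^(n+1)
    have : (-1:ℤ)^(n+1) = -(-1)^n := by ring
    rw [this, ← ih]; ring

lemma gcd_ST (a : ℕ → ℤ) (k : ℕ) : Int.gcd (cfS a k) (cfT a k) = 1 := by
  rw [← Int.isCoprime_iff_gcd_eq_one]
  have h := cfDet a k
  rcases Nat.even_or_odd k with hk | hk
  · exact ⟨-cfT a (k+1), cfS a (k+1), by rw [hk.neg_one_pow] at h; linarith⟩
  · exact ⟨cfT a (k+1), -cfS a (k+1), by rw [hk.neg_one_pow] at h; linarith⟩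

lemma gcd_TT (a : ℕ → ℤ) (k : ℕ) : Int.gcd (cfT a k) (cfT a (k+1)) = 1 := by
  rw [← Int.isCoprime_iff_gcd_eq_one]
  have h := cfDet a k
  rcases Nat.even_or_odd k with hk | hk
  · exact ⟨cfS a (k+1), -cfS a k, by rw [hk.neg_one_pow] at h; linarith⟩
  · exact ⟨-cfS a (k+1), cfS a k, by rw [hk.neg_one_pow] at h; linarith⟩

lemma step (a : ℕ → ℤ) (ha : ∀ i, 1 ≤ i → 0 < a i) (k : ℕ)
    (h1 : Odd (cfT a k)) (h2 : Odd (cfT a (k+1))) :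
    jacobiSym (cfS a k) (cfT a k).natAbs * jacobiSym (cfS a (k+1)) (cfT a (k+1)).natAbs =
      ZMod.χ₄ ((cfT a (k+1)).natAbs : ℕ) ^ k * ZMod.χ₄ ((cfT a k).natAbs : ℕ) ^ (k+1) *
      (if (cfT a k).natAbs % 4 = 3 ∧ (cfT a (k+1)).natAbs % 4 = 3 then (-1:ℤ) else 1) := by
  set m := (cfT a k).natAbs with hmdef
  set n := (cfT a (k+1)).natAbs with hndef
  have hm : (m : ℤ) = cfT a k := Int.natAbs_of_nonneg (cfT_pos a ha k).le
  have hn : (n : ℤ) = cfT a (k+1) := Int.natAbs_of_nonneg (cfT_pos a ha (k+1)).le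
  have hmo : Odd m := h1.natAbs
  have hno : Odd n := h2.natAbs
  have eA : jacobiSym (cfS a (k+1)) n * jacobiSym (m:ℤ) n = jacobiSym (-1) n ^ k := by
    rw [← jacobiSym.mul_left, ← jacobiSym.pow_left, hm]
    apply jacobiSym.mod_left'
    have hd : (n:ℤ) ∣ (-1)^k - cfS a (k+1) * cfT a k :=
      ⟨-cfS a k, by rw [hn]; linear_combination -(cfDet a k)⟩
    exact Int.modEq_iff_dvd.mpr hd
  have eB : jacobiSym (cfS a k) m * jacobiSym (n:ℤ) m = jacobiSym (-1) m ^ (k+1) := by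
    rw [← jacobiSym.mul_left, ← jacobiSym.pow_left, hn]
    apply jacobiSym.mod_left'
    have hd : (m:ℤ) ∣ (-1)^(k+1) - cfS a k * cfT a (k+1) :=
      ⟨-cfS a (k+1), by rw [hm]; linear_combination cfDet a k⟩
    exact Int.modEq_iff_dvd.mpr hd
  have hrec : (if m % 4 = 3 ∧ n % 4 = 3 then -jacobiSym (n:ℤ) m else jacobiSym (n:ℤ) m)
      = jacobiSym (m:ℤ) n :=
    jacobiSym.quadratic_reciprocity_if (Nat.odd_iff.mp hmo) (Nat.odd_iff.mp hno)
  have sqQ : jacobiSym (n:ℤ) m ^ 2 = 1 := by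
    apply jacobiSym.sq_one
    simpa [Int.gcd, Nat.gcd_comm] using gcd_TT a k
  rw [← jacobiSym.at_neg_one hno, ← jacobiSym.at_neg_one hmo, ← eA, ← eB, ← hrec]
  split_ifs with hc
  · linear_combination (-(jacobiSym (cfS a k) (m:ℕ) * jacobiSym (cfS a (k+1)) (n:ℕ))) * sqQ
  · linear_combination (-(jacobiSym (cfS a k) (m:ℕ) * jacobiSym (cfS a (k+1)) (n:ℕ))) * sqQ

lemma step' (a : ℕ → ℤ) (ha : ∀ i, 1 ≤ i → 0 < a i) (k : ℕ)
    (h1 : Odd (cfT a k)) (h2 : Odd (cfT a (k+1))) :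
    jacobiSym (cfS a k) (cfT a k).natAbs * jacobiSym (cfS a (k+1)) (cfT a (k+1)).natAbs =
      (if Even k then (if (cfT a k).natAbs % 4 = 3 then (-1:ℤ) else 1)
        else (if (cfT a (k+1)).natAbs % 4 = 3 then (-1:ℤ) else 1)) *
      (if (cfT a k).natAbs % 4 = 3 ∧ (cfT a (k+1)).natAbs % 4 = 3 then (-1:ℤ) else 1) := by
  rw [step a ha k h1 h2]
  congr 1
  have cm : (ZMod.χ₄ ((cfT a k).natAbs : ℕ) : ℤ)
      = (if (cfT a k).natAbs % 4 = 3 then (-1:ℤ) else 1) := by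
    rcases Nat.odd_mod_four_iff.mp (Nat.odd_iff.mp h1.natAbs) with h | h
    · rw [ZMod.χ₄_nat_one_mod_four h]; simp [h]
    · rw [ZMod.χ₄_nat_three_mod_four h]; simp [h]
  have cn : (ZMod.χ₄ ((cfT a (k+1)).natAbs : ℕ) : ℤ)
      = (if (cfT a (k+1)).natAbs % 4 = 3 then (-1:ℤ) else 1) := by
    rcases Nat.odd_mod_four_iff.mp (Nat.odd_iff.mp h2.natAbs) with h | h
    · rw [ZMod.χ₄_nat_one_mod_four h]; simp [h]
    · rw [ZMod.χ₄_nat_three_mod_four h]; simp [h]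
  rw [cm, cn]
  rcases Nat.even_or_odd k with hk | hk
  · rw [if_pos hk]
    split_ifs <;> simp [hk.neg_one_pow, (hk.add_one).neg_one_pow]
  · rw [if_neg (show ¬ Even k by rw [Nat.even_iff]; rw [Nat.odd_iff] at hk; omega)]
    split_ifs <;> simp [hk.neg_one_pow, (hk.add_one).neg_one_pow]

theorem no_pattern_neg_one_one_one_neg_one
    (a : ℕ → ℤ) (ha : ∀ i, 1 ≤ i → 0 < a i) :
    ¬ ∃ k : ℕ,
      Odd (cfT a k) ∧ Odd (cfT a (k+1)) ∧ Odd (cfT a (k+2)) ∧ Odd (cfT a (k+3)) ∧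
      jacobiSym (cfS a k) (cfT a k).natAbs = -1 ∧
      jacobiSym (cfS a (k+1)) (cfT a (k+1)).natAbs = 1 ∧
      jacobiSym (cfS a (k+2)) (cfT a (k+2)).natAbs = 1 ∧
      jacobiSym (cfS a (k+3)) (cfT a (k+3)).natAbs = -1 := by
  rintro ⟨k, o0, o1, o2, o3, j0, j1, j2, j3⟩
  have e0 := step' a ha k o0 o1
  have e1 : jacobiSym (cfS a (k+1)) (cfT a (k+1)).natAbs *
        jacobiSym (cfS a (k+2)) (cfT a (k+2)).natAbs =
      (if Even (k+1) then (if (cfT a (k+1)).natAbs % 4 = 3 then (-1:ℤ) else 1)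
        else (if (cfT a (k+2)).natAbs % 4 = 3 then (-1:ℤ) else 1)) *
      (if (cfT a (k+1)).natAbs % 4 = 3 ∧ (cfT a (k+2)).natAbs % 4 = 3 then (-1:ℤ) else 1) :=
    step' a ha (k+1) o1 o2
  have e2 : jacobiSym (cfS a (k+2)) (cfT a (k+2)).natAbs *
        jacobiSym (cfS a (k+3)) (cfT a (k+3)).natAbs =
      (if Even (k+2) then (if (cfT a (k+2)).natAbs % 4 = 3 then (-1:ℤ) else 1)
        else (if (cfT a (k+3)).natAbs % 4 = 3 then (-1:ℤ) else 1)) *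
      (if (cfT a (k+2)).natAbs % 4 = 3 ∧ (cfT a (k+3)).natAbs % 4 = 3 then (-1:ℤ) else 1) :=
    step' a ha (k+2) o2 o3
  rw [j0, j1] at e0
  rw [j1, j2] at e1
  rw [j2, j3] at e2
  rcases Nat.even_or_odd k with hk | hk
  · rw [if_pos hk] at e0
    rw [if_neg (show ¬ Even (k+1) by simp [Nat.even_add_one, hk])] at e1
    rw [if_pos (show Even (k+2) by simp [Nat.even_add_one, hk])] at e2
    by_cases c1 : (cfT a k).natAbs % 4 = 3 <;>
    by_cases c2 : (cfT a (k+1)).natAbs % 4 = 3 <;>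
    by_cases c3 : (cfT a (k+2)).natAbs % 4 = 3 <;>
    by_cases c4 : (cfT a (k+3)).natAbs % 4 = 3 <;>
      (revert e0 e1 e2; norm_num [c1, c2, c3, c4])
  · have hk' : ¬ Even k := by rw [Nat.even_iff]; rw [Nat.odd_iff] at hk; omega
    rw [if_neg hk'] at e0
    rw [if_pos (Nat.even_add_one.mpr hk')] at e1
    rw [if_neg (show ¬ Even (k+2) by simp [Nat.even_add_one, hk'])] at e2
    by_cases c1 : (cfT a k).natAbs % 4 = 3 <;>
    by_cases c2 : (cfT a (k+1)).natAbs % 4 = 3 <;>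
    by_cases c3 : (cfT a (k+2)).natAbs % 4 = 3 <;>
    by_cases c4 : (cfT a (k+3)).natAbs % 4 = 3 <;>
      (revert e0 e1 e2; norm_num [c1, c2, c3, c4])
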